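/- Let R be a finite commutative chain ring with maximal ideal ⟨γ⟩, nilpotency index s, and residue field of size q, and set M = q/(q−1). For n ≥ 1 and a real number d ≥ 0, let B_R(n, d) = max{|C| : C ⊆ R^n a linear code with d_Hom(C) ≥ d}, where by convention d_Hom({0}) = M·(n+1), and for δ ≥ 0 define β_R(δ) = limsup_{n→∞} (1/n)·log_{|R|}(B_R(n, δn)). Then for every δ with 0 ≤ δ ≤ 1, β_R(δ) ≤ 1 − δ; in particular β_R(1) = 0. -/

import Mathlib

open scoped BigOperators Classical

/-- The normalized homogeneous weight on a finite chain ring with maximal ideal `⟨γ⟩`,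
nilpotency index `s` and residue field of size `q`. -/
noncomputable def wtHom {R : Type*} [CommRing R] (γ : R) (s q : ℕ) (x : R) : ℚ :=
  if x = 0 then 0
  else if x ∈ Ideal.span {γ ^ (s - 1)} then (q : ℚ) / ((q : ℚ) - 1)
  else 1

/-- Homogeneous weight of a vector: the sum of the weights of its coordinates. -/
noncomputable def wtHomV {R : Type*} [CommRing R] (γ : R) (s q : ℕ) {n : ℕ}
    (v : Fin n → R) : ℚ :=
  ∑ i, wtHom γ s q (v i)

/-- Hamming weight of a vector: the number of nonzero coordinates. -/
noncomputable def hWt {R : Type*} [Zero R] {n : ℕ} (v : Fin n → R) : ℕ :=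
  Nat.card {i : Fin n // v i ≠ 0}

/-- `K` is the rank of the code `C`: the least cardinality of a generating set of `C`
as an `R`-module. -/
def IsCodeRank {R : Type*} [CommRing R] {n : ℕ} (C : Submodule R (Fin n → R)) (K : ℕ) : Prop :=
  IsLeast {k : ℕ | ∃ S : Finset (Fin n → R),
    S.card = k ∧ Submodule.span R (S : Set (Fin n → R)) = C} K

/-- The socle of a code: the codewords all of whose coordinates lie in `⟨γ^(s-1)⟩`. -/
def socleCode {R : Type*} [CommRing R] (γ : R) (s : ℕ) {n : ℕ}
    (C : Submodule R (Fin n → R)) : Submodule R (Fin n → R) :=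
  C ⊓ Submodule.pi Set.univ (fun _ : Fin n => Ideal.span {γ ^ (s - 1)})

/-- `BmaxHom γ s q n d` is the largest cardinality of a linear code `C ⊆ R^n` whose
minimum homogeneous distance is at least `d`. -/
noncomputable def BmaxHom {R : Type*} [CommRing R] [Fintype R] (γ : R) (s q : ℕ)
    (n : ℕ) (d : ℝ) : ℕ :=
  sSup {N : ℕ | ∃ C : Submodule R (Fin n → R),
    (∀ c ∈ C, c ≠ 0 → d ≤ ((wtHomV γ s q c : ℚ) : ℝ)) ∧ Nat.card C = N}

lemma card_socle_le {R : Type*} [CommRing R] [Fintype R] (γ : R) (s q : ℕ)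
    (hs : 1 ≤ s) (hnil : γ ^ s = 0)
    (hq : Nat.card (R ⧸ Ideal.span {γ}) = q) :
    Nat.card (Ideal.span {γ ^ (s-1)} : Ideal R) ≤ q := by
  set f := LinearMap.toSpanSingleton R R (γ ^ (s-1)) with hf
  have hker : Ideal.span {γ} ≤ LinearMap.ker f := by
    rw [Ideal.span_singleton_le_iff_mem, LinearMap.mem_ker]
    show γ • γ ^ (s-1) = 0
    rw [smul_eq_mul, ← pow_succ']
    rw [Nat.sub_add_cancel hs] at *
    exact hnil
  set g := Submodule.liftQ (Ideal.span {γ}) f hker with hg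
  have hrange : LinearMap.range g = Ideal.span {γ ^ (s-1)} := by
    rw [hg, Submodule.range_liftQ, hf, ← LinearMap.span_singleton_eq_range]
  calc Nat.card (Ideal.span {γ ^ (s-1)} : Ideal R)
      = Nat.card (LinearMap.range g) := by rw [hrange]
    _ ≤ Nat.card (R ⧸ Ideal.span {γ}) :=
        Nat.card_le_card_of_surjective _ (LinearMap.surjective_rangeRestrict g)
    _ = q := hq

lemma sum_wt_coord_le {R : Type*} [CommRing R] [Fintype R] (γ : R) (s q : ℕ)
    (hq2 : 2 ≤ q)
    (hcard : Nat.card (Ideal.span {γ ^ (s-1)} : Ideal R) ≤ q)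
    {n : ℕ} (D : Submodule R (Fin n → R)) (i : Fin n) :
    ∑ c : D, wtHom γ s q ((c : Fin n → R) i) ≤ (Nat.card D : ℚ) := by
  classical
  set S : Ideal R := Ideal.span {γ ^ (s-1)} with hS
  set A0 : Finset D := Finset.univ.filter (fun c : D => (c : Fin n → R) i = 0) with hA0
  set As : Finset D := Finset.univ.filter
    (fun c : D => (c : Fin n → R) i ≠ 0 ∧ (c : Fin n → R) i ∈ S) with hAs
  set A1 : Finset D := Finset.univ.filter
    (fun c : D => (c : Fin n → R) i ≠ 0 ∧ (c : Fin n → R) i ∉ S) with hA1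
  -- the sum equals M * |As| + |A1|
  have key : ∑ c : D, wtHom γ s q ((c : Fin n → R) i)
      = ((q : ℚ) / ((q : ℚ) - 1)) * As.card + A1.card := by
    have hsplit : ∀ c : D, wtHom γ s q ((c : Fin n → R) i)
        = (if c ∈ As then (q : ℚ) / ((q : ℚ) - 1) else 0) + (if c ∈ A1 then 1 else 0) := by
      intro c
      by_cases h0 : (c : Fin n → R) i = 0
      · simp [wtHom, h0, hAs, hA1]
      · by_cases hmem : (c : Fin n → R) i ∈ S
        · simp [wtHom, h0, hmem, hAs, hA1, hS, show (c : Fin n → R) i ∈ Ideal.span {γ ^ (s - 1)} from hmem]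
        · simp [wtHom, h0, hmem, hAs, hA1, hS, show (c : Fin n → R) i ∉ Ideal.span {γ ^ (s - 1)} from hmem]
    rw [Finset.sum_congr rfl (fun c _ => hsplit c), Finset.sum_add_distrib]
    rw [Finset.sum_ite_mem, Finset.sum_ite_mem]
    simp [Finset.univ_inter, Finset.sum_const, mul_comm]
  -- fiberwise bound : |As| ≤ (q-1) * |A0|
  have hfiber : As.card ≤ (q - 1) * A0.card := by
    set T : Finset R := (Finset.univ.filter (fun y : R => y ∈ S)).erase 0 with hT
    have hmapsto : ∀ c ∈ As, (c : Fin n → R) i ∈ T := by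
      intro c hc
      rw [hAs, Finset.mem_filter] at hc
      rw [hT, Finset.mem_erase, Finset.mem_filter]
      exact ⟨hc.2.1, Finset.mem_univ _, hc.2.2⟩
    rw [Finset.card_eq_sum_card_fiberwise hmapsto]
    have hfib : ∀ y ∈ T, (As.filter (fun c : D => (c : Fin n → R) i = y)).card ≤ A0.card := by
      intro y hy
      rcases Finset.eq_empty_or_nonempty (As.filter (fun c : D => (c : Fin n → R) i = y)) with
        he | ⟨c0, hc0⟩
      · simp [he]
      · apply Finset.card_le_card_of_injOn (fun c => c - c0)
        · intro c hc
          rw [Finset.mem_coe, Finset.mem_filter] at hc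
          rw [Finset.mem_filter] at hc0
          rw [Finset.mem_coe, hA0, Finset.mem_filter]
          refine ⟨Finset.mem_univ _, ?_⟩
          show ((c : Fin n → R) - (c0 : Fin n → R)) i = 0
          simp [Pi.sub_apply, hc.2, hc0.2]
        · intro a _ b _ hab
          exact sub_left_injective hab
    calc ∑ y ∈ T, (As.filter (fun c : D => (c : Fin n → R) i = y)).card
        ≤ ∑ _y ∈ T, A0.card := Finset.sum_le_sum hfib
      _ = T.card * A0.card := by rw [Finset.sum_const, smul_eq_mul]
      _ ≤ (q - 1) * A0.card := by
          apply Nat.mul_le_mul_right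
          have h0S : (0 : R) ∈ Finset.univ.filter (fun y : R => y ∈ S) := by
            simp [S.zero_mem]
          rw [hT, Finset.card_erase_of_mem h0S]
          have : (Finset.univ.filter (fun y : R => y ∈ S)).card = Nat.card S := by
            rw [Nat.card_eq_fintype_card, Fintype.card_subtype]
          omega
  -- conclude
  have hcardD : (Nat.card D : ℚ) = (A0.card : ℚ) + As.card + A1.card := by
    set B : Finset D := Finset.univ.filter (fun c : D => ¬ (c : Fin n → R) i = 0) with hB
    have e2 : B.filter (fun c : D => (c : Fin n → R) i ∈ S) = As := by
      ext c; simp [hB, hAs, Finset.mem_filter, and_assoc]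
    have e3 : B.filter (fun c : D => ¬ (c : Fin n → R) i ∈ S) = A1 := by
      ext c; simp [hB, hA1, Finset.mem_filter, and_assoc]
    have t1 := Finset.card_filter_add_card_filter_not
      (s := (Finset.univ : Finset D)) (p := fun c : D => (c : Fin n → R) i = 0)
    have t2 := Finset.card_filter_add_card_filter_not
      (s := B) (p := fun c : D => (c : Fin n → R) i ∈ S)
    rw [← hB] at t1
    rw [e2, e3] at t2
    rw [Finset.card_univ] at t1
    have h5 : Fintype.card D = A0.card + (As.card + A1.card) := by rw [← t1, ← t2]
    rw [Nat.card_eq_fintype_card, h5]; push_cast; ring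
  rw [key, hcardD]
  have hq1 : (1 : ℚ) ≤ (q : ℚ) - 1 := by
    have : (2 : ℚ) ≤ (q : ℚ) := by exact_mod_cast hq2
    linarith
  have hpos : (0 : ℚ) < (q : ℚ) - 1 := by linarith
  have hfibq : (As.card : ℚ) ≤ ((q : ℚ) - 1) * A0.card := by
    have h1 : 1 ≤ q := by omega
    calc (As.card : ℚ) ≤ ((q - 1 : ℕ) : ℚ) * A0.card := by exact_mod_cast hfiber
      _ = ((q : ℚ) - 1) * A0.card := by push_cast [Nat.cast_sub h1]; ring
  suffices h : (q:ℚ)/((q:ℚ)-1) * As.card ≤ (A0.card : ℚ) + As.card by linarith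
  rw [div_mul_eq_mul_div, div_le_iff₀ hpos]
  nlinarith [hfibq]

lemma card_shortened_le {R : Type*} [CommRing R] [Fintype R] (γ : R) (s q : ℕ)
    (hq2 : 2 ≤ q)
    (hcard : Nat.card (Ideal.span {γ ^ (s-1)} : Ideal R) ≤ q)
    {n : ℕ} (D : Submodule R (Fin n → R)) (m : ℕ) (hm : 1 ≤ m)
    (hwt : ∀ c ∈ D, c ≠ 0 → (m : ℚ) ≤ wtHomV γ s q c)
    (hsupp : ∀ c ∈ D, ∀ i : Fin n, (m - 1 : ℕ) ≤ (i : ℕ) → c i = 0) :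
    Nat.card D ≤ m := by
  classical
  set N := Nat.card D with hN
  have hN1 : 1 ≤ N := Nat.one_le_iff_ne_zero.mpr (Nat.card_ne_zero.mpr ⟨⟨0, D.zero_mem⟩, inferInstance⟩)
  -- total weight
  set T : ℚ := ∑ c : D, wtHomV γ s q (c : Fin n → R) with hT
  have hupper : T ≤ ((m : ℚ) - 1) * N := by
    have : T = ∑ i : Fin n, ∑ c : D, wtHom γ s q ((c : Fin n → R) i) := by
      rw [hT]; unfold wtHomV; rw [Finset.sum_comm]
    rw [this]
    have hsm : ∀ i : Fin n, ∑ c : D, wtHom γ s q ((c : Fin n → R) i)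
        ≤ if (i : ℕ) < m - 1 then (N : ℚ) else 0 := by
      intro i
      by_cases hi : (i : ℕ) < m - 1
      · simpa [hi, hN] using sum_wt_coord_le γ s q hq2 hcard D i
      · simp only [hi, if_false]
        apply le_of_eq
        apply Finset.sum_eq_zero
        intro c _
        rw [hsupp c c.2 i (by omega)]
        simp [wtHom]
    calc ∑ i : Fin n, ∑ c : D, wtHom γ s q ((c : Fin n → R) i)
        ≤ ∑ i : Fin n, if (i : ℕ) < m - 1 then (N : ℚ) else 0 := Finset.sum_le_sum (fun i _ => hsm i)
      _ = ((Finset.univ.filter (fun i : Fin n => (i : ℕ) < m - 1)).card : ℚ) * N := by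
          rw [Finset.sum_ite, Finset.sum_const_zero, add_zero, Finset.sum_const]
          push_cast; ring
      _ ≤ ((m : ℚ) - 1) * N := by
          apply mul_le_mul_of_nonneg_right _ (by positivity)
          have hc : (Finset.univ.filter (fun i : Fin n => (i : ℕ) < m - 1)).card ≤ m - 1 := by
            have h := Finset.card_le_card_of_injOn
              (s := Finset.univ.filter (fun i : Fin n => (i : ℕ) < m - 1))
              (t := Finset.range (m-1)) (fun i : Fin n => (i : ℕ))
              (fun i hi => Finset.mem_range.mpr (Finset.mem_filter.mp hi).2)
              (fun a _ b _ h => Fin.ext h)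
            simpa using h
          calc ((Finset.univ.filter (fun i : Fin n => (i : ℕ) < m - 1)).card : ℚ)
              ≤ ((m - 1 : ℕ) : ℚ) := by exact_mod_cast hc
            _ ≤ (m : ℚ) - 1 := by
                have : ((m - 1 : ℕ) : ℚ) = (m : ℚ) - 1 := by
                  push_cast [Nat.cast_sub hm]; ring
                rw [this]
  have hlower : ((N : ℚ) - 1) * m ≤ T := by
    have h0 : wtHomV γ s q ((0 : D) : Fin n → R) = 0 := by
      unfold wtHomV; apply Finset.sum_eq_zero; intro i _; simp [wtHom]
    have heq : T = wtHomV γ s q ((0 : D) : Fin n → R)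
        + ∑ c ∈ (Finset.univ : Finset D).erase 0, wtHomV γ s q (c : Fin n → R) :=
      (Finset.add_sum_erase _ _ (Finset.mem_univ _)).symm
    rw [heq, h0, zero_add]
    have hcarde : ((Finset.univ : Finset D).erase 0).card = N - 1 := by
      rw [Finset.card_erase_of_mem (Finset.mem_univ _), Finset.card_univ, hN,
        Nat.card_eq_fintype_card]
    calc ((N : ℚ) - 1) * m = (((N - 1 : ℕ) : ℚ)) * m := by
          push_cast [Nat.cast_sub hN1]; ring
      _ = ∑ _c ∈ (Finset.univ : Finset D).erase 0, (m : ℚ) := by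
          rw [Finset.sum_const, hcarde]; push_cast; ring
      _ ≤ _ := by
          apply Finset.sum_le_sum
          intro c hc
          have hc0 : (c : Fin n → R) ≠ 0 := by
            intro h
            apply Finset.ne_of_mem_erase hc
            exact Subtype.ext h
          exact hwt c c.2 hc0
  have : ((N : ℚ) - 1) * m ≤ ((m : ℚ) - 1) * N := le_trans hlower hupper
  have hm' : (1:ℚ) ≤ (m:ℚ) := by exact_mod_cast hm
  have : (N : ℚ) ≤ m := by nlinarith
  exact_mod_cast this

lemma code_card_le {R : Type*} [CommRing R] [Fintype R] (γ : R) (s q : ℕ)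
    (hq2 : 2 ≤ q)
    (hcard : Nat.card (Ideal.span {γ ^ (s-1)} : Ideal R) ≤ q)
    {n : ℕ} (C : Submodule R (Fin n → R)) {m : ℕ} (hm2 : 2 ≤ m) (hmn : m ≤ n)
    (hwt : ∀ c ∈ C, c ≠ 0 → (m : ℚ) ≤ wtHomV γ s q c) :
    Nat.card C ≤ m * Fintype.card R ^ (n - m + 1) := by
  classical
  set t := n - m + 1 with ht
  have he : ∀ j : Fin t, m - 1 + (j : ℕ) < n := by
    intro j; have := j.isLt; omega
  set e : Fin t → Fin n := fun j => ⟨m - 1 + (j : ℕ), he j⟩ with hee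
  set ψ : C →ₗ[R] (Fin t → R) := (LinearMap.funLeft R R e).comp C.subtype with hψ
  have hdecomp := Submodule.card_eq_card_quotient_mul_card (LinearMap.ker ψ)
  have hquot : Nat.card (C ⧸ LinearMap.ker ψ) = Nat.card (LinearMap.range ψ) :=
    Nat.card_congr (ψ.quotKerEquivRange).toEquiv
  have hrange : Nat.card (LinearMap.range ψ) ≤ Fintype.card R ^ t := by
    calc Nat.card (LinearMap.range ψ) ≤ Nat.card (Fin t → R) :=
          Nat.card_le_card_of_injective _ Subtype.val_injective
      _ = Fintype.card R ^ t := by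
          rw [Nat.card_eq_fintype_card, Fintype.card_fun, Fintype.card_fin]
  -- the kernel, as a code in R^n
  set D : Submodule R (Fin n → R) := Submodule.map C.subtype (LinearMap.ker ψ) with hD
  have hkerD : Nat.card (LinearMap.ker ψ) = Nat.card D :=
    Nat.card_congr (Submodule.equivMapOfInjective C.subtype
      (Submodule.injective_subtype C) (LinearMap.ker ψ)).toEquiv
  have hDle : Nat.card D ≤ m := by
    apply card_shortened_le γ s q hq2 hcard D m (by omega)
    · intro c hc hc0
      rcases hc with ⟨x, _, rfl⟩
      exact hwt _ x.2 hc0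
    · intro c hc i hi
      rcases hc with ⟨x, hx, rfl⟩
      have hxk : ψ x = 0 := hx
      have hj : (i : ℕ) - (m - 1) < t := by have := i.isLt; omega
      have : i = e ⟨(i : ℕ) - (m - 1), hj⟩ := by
        apply Fin.ext; simp [hee]; omega
      rw [this]
      have := congrFun hxk ⟨(i : ℕ) - (m - 1), hj⟩
      simpa [hψ, LinearMap.funLeft] using this
  calc Nat.card C = Nat.card (LinearMap.ker ψ) * Nat.card (C ⧸ LinearMap.ker ψ) := hdecomp
    _ = Nat.card D * Nat.card (LinearMap.range ψ) := by rw [hkerD, hquot]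
    _ ≤ m * Fintype.card R ^ t := Nat.mul_le_mul hDle hrange

lemma card_bot_submodule {R : Type*} [CommRing R] {n : ℕ} :
    Nat.card (⊥ : Submodule R (Fin n → R)) = 1 := by
  rw [Nat.card_eq_one_iff_unique]
  exact ⟨⟨fun a b => Subtype.ext (by
    have ha := (Submodule.mem_bot R).mp a.2
    have hb := (Submodule.mem_bot R).mp b.2
    rw [ha, hb])⟩, ⟨0, Submodule.zero_mem _⟩⟩

lemma one_le_BmaxHom {R : Type*} [CommRing R] [Fintype R] (γ : R) (s q : ℕ)
    (n : ℕ) (d : ℝ) : 1 ≤ BmaxHom γ s q n d := by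
  classical
  apply le_csSup
  · -- bounded above
    refine ⟨Fintype.card R ^ n, ?_⟩
    rintro N ⟨C, -, rfl⟩
    calc Nat.card C ≤ Nat.card (Fin n → R) :=
          Nat.card_le_card_of_injective _ Subtype.val_injective
      _ = Fintype.card R ^ n := by
          rw [Nat.card_eq_fintype_card, Fintype.card_fun, Fintype.card_fin]
  · exact ⟨⊥, fun c hc hc0 => absurd (Submodule.mem_bot R |>.mp hc) hc0, card_bot_submodule⟩

lemma BmaxHom_le {R : Type*} [CommRing R] [Fintype R] (γ : R) (s q : ℕ)
    (hq2 : 2 ≤ q)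
    (hcard : Nat.card (Ideal.span {γ ^ (s-1)} : Ideal R) ≤ q)
    (n : ℕ) (d : ℝ) (hd0 : 0 ≤ d) (hdn : d ≤ n) :
    BmaxHom γ s q n d ≤ (n + 1) * Fintype.card R ^ (n - ⌊d⌋₊ + 1) := by
  classical
  have hQ1 : 1 ≤ Fintype.card R := Fintype.card_pos
  set m := ⌊d⌋₊ with hm
  have hmn : m ≤ n := by
    calc m = ⌊d⌋₊ := hm
      _ ≤ ⌊(n : ℝ)⌋₊ := Nat.floor_mono hdn
      _ = n := Nat.floor_natCast n
  have hcboc : ∀ N ∈ {N : ℕ | ∃ C : Submodule R (Fin n → R),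
      (∀ c ∈ C, c ≠ 0 → d ≤ ((wtHomV γ s q c : ℚ) : ℝ)) ∧ Nat.card C = N},
      N ≤ (n + 1) * Fintype.card R ^ (n - m + 1) := by
    rintro N ⟨C, hC, rfl⟩
    have htriv : Nat.card C ≤ Fintype.card R ^ n := by
      calc Nat.card C ≤ Nat.card (Fin n → R) :=
            Nat.card_le_card_of_injective _ Subtype.val_injective
        _ = Fintype.card R ^ n := by
            rw [Nat.card_eq_fintype_card, Fintype.card_fun, Fintype.card_fin]
    by_cases hm2 : 2 ≤ m
    · have hwt : ∀ c ∈ C, c ≠ 0 → (m : ℚ) ≤ wtHomV γ s q c := by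
        intro c hc hc0
        have h1 : (m : ℝ) ≤ d := Nat.floor_le hd0
        have h2 := hC c hc hc0
        have : (m : ℝ) ≤ ((wtHomV γ s q c : ℚ) : ℝ) := le_trans h1 h2
        exact_mod_cast this
      calc Nat.card C ≤ m * Fintype.card R ^ (n - m + 1) :=
            code_card_le γ s q hq2 hcard C hm2 hmn hwt
        _ ≤ (n + 1) * Fintype.card R ^ (n - m + 1) :=
            Nat.mul_le_mul_right _ (by omega)
    · calc Nat.card C ≤ Fintype.card R ^ n := htriv
        _ ≤ (n + 1) * Fintype.card R ^ (n - m + 1) := by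
            have : n ≤ n - m + 1 := by omega
            calc Fintype.card R ^ n ≤ Fintype.card R ^ (n - m + 1) :=
                  Nat.pow_le_pow_right hQ1 this
              _ ≤ (n + 1) * Fintype.card R ^ (n - m + 1) := Nat.le_mul_of_pos_left _ (by omega)
  apply csSup_le
  · exact ⟨1, ⊥, fun c hc hc0 => absurd (Submodule.mem_bot R |>.mp hc) hc0, card_bot_submodule⟩
  · exact hcboc

lemma tendsto_log_succ_div : Filter.Tendsto
    (fun n : ℕ => Real.log (n + 1) / n) Filter.atTop (nhds 0) := by
  have h1 : Filter.Tendsto (fun x : ℝ => Real.log x / x) Filter.atTop (nhds 0) :=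
    Real.isLittleO_log_id_atTop.tendsto_div_nhds_zero
  have h2 : Filter.Tendsto (fun n : ℕ => (n : ℝ) + 1) Filter.atTop Filter.atTop :=
    Filter.tendsto_atTop_add_const_right _ 1 tendsto_natCast_atTop_atTop
  have h3 : Filter.Tendsto (fun n : ℕ => Real.log (n + 1) / (n + 1)) Filter.atTop (nhds 0) :=
    h1.comp h2
  have h4 : Filter.Tendsto (fun n : ℕ => ((n : ℝ) + 1) / n) Filter.atTop (nhds 1) := by
    have : Filter.Tendsto (fun n : ℕ => 1 + 1 / (n : ℝ)) Filter.atTop (nhds (1 + 0)) :=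
      (tendsto_const_nhds).add tendsto_one_div_atTop_nhds_zero_nat
    rw [add_zero] at this
    apply this.congr'
    filter_upwards [Filter.eventually_atTop.mpr ⟨1, fun n hn => hn⟩] with n hn
    have hn0 : (n : ℝ) ≠ 0 := by positivity
    field_simp
  have := h3.mul h4
  rw [zero_mul] at this
  apply this.congr'
  filter_upwards [Filter.eventually_atTop.mpr ⟨1, fun n hn => hn⟩] with n hn
  have hn0 : (n : ℝ) ≠ 0 := by positivity
  have hn1 : (n : ℝ) + 1 ≠ 0 := by positivity
  field_simp

lemma limsup_le {R : Type*} [CommRing R] [Fintype R] (γ : R) (s q : ℕ)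
    (hq2 : 2 ≤ q) (hQ : 1 < Fintype.card R)
    (hcard : Nat.card (Ideal.span {γ ^ (s-1)} : Ideal R) ≤ q)
    (δ : ℝ) (hδ0 : 0 ≤ δ) (hδ1 : δ ≤ 1) :
    Filter.limsup (fun n : ℕ => (1 / (n : ℝ)) *
        Real.logb (Fintype.card R) (BmaxHom γ s q n (δ * n))) Filter.atTop ≤ 1 - δ := by
  set Q : ℕ := Fintype.card R with hQdef
  have hQ1 : (1 : ℝ) < (Q : ℝ) := by exact_mod_cast hQ
  set f : ℕ → ℝ := fun n => (1 / (n : ℝ)) * Real.logb Q (BmaxHom γ s q n (δ * n)) with hf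
  set g : ℕ → ℝ := fun n => 1 - δ + (2 + Real.logb Q (n + 1)) / n with hg
  -- pointwise bound
  have hfg : ∀ n : ℕ, 1 ≤ n → f n ≤ g n := by
    intro n hn
    have hn0 : (0 : ℝ) < (n : ℝ) := by positivity
    have hd0 : (0 : ℝ) ≤ δ * n := by positivity
    have hdn : δ * n ≤ n := by nlinarith
    set m : ℕ := ⌊δ * (n : ℝ)⌋₊ with hm
    have hmn : m ≤ n := by
      calc m ≤ ⌊(n : ℝ)⌋₊ := Nat.floor_mono hdn
        _ = n := Nat.floor_natCast n
    have hB1 : 1 ≤ BmaxHom γ s q n (δ * n) := one_le_BmaxHom γ s q n (δ * n)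
    have hBle := BmaxHom_le γ s q hq2 hcard n (δ * n) hd0 hdn
    set k : ℕ := n - m + 1 with hk
    have hlog : Real.logb Q (BmaxHom γ s q n (δ * n))
        ≤ Real.logb Q (n + 1) + k := by
      calc Real.logb Q (BmaxHom γ s q n (δ * n))
          ≤ Real.logb Q (((n + 1) * Q ^ k : ℕ) : ℝ) := by
            apply Real.logb_le_logb_of_le hQ1 (by exact_mod_cast hB1)
            exact_mod_cast hBle
        _ = Real.logb Q (((n : ℝ) + 1) * (Q : ℝ) ^ k) := by push_cast; ring_nf
        _ = Real.logb Q (n + 1) + k := by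
            rw [Real.logb_mul (by positivity) (by positivity), Real.logb_pow,
              Real.logb_self_eq_one hQ1]
            ring
    have hkle : (k : ℝ) ≤ (n : ℝ) - δ * n + 2 := by
      have h1 : δ * (n : ℝ) < m + 1 := Nat.lt_floor_add_one _
      have h2 : ((n - m : ℕ) : ℝ) = (n : ℝ) - m := by
        push_cast [Nat.cast_sub hmn]; ring
      rw [hk]
      push_cast [h2]
      linarith
    have hlogQn : (0:ℝ) ≤ Real.logb Q (n+1) := Real.logb_nonneg hQ1 (by push_cast; linarith)
    calc f n ≤ (1 / (n : ℝ)) * (Real.logb Q (n + 1) + ((n : ℝ) - δ * n + 2)) := by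
          apply mul_le_mul_of_nonneg_left _ (by positivity)
          calc Real.logb Q (BmaxHom γ s q n (δ * n)) ≤ Real.logb Q (n + 1) + k := hlog
            _ ≤ Real.logb Q (n + 1) + ((n : ℝ) - δ * n + 2) := by linarith
      _ = g n := by
          rw [hg]
          have hne : (n : ℝ) ≠ 0 := ne_of_gt hn0
          field_simp
          ring
  -- tendsto of g
  have hgt : Filter.Tendsto g Filter.atTop (nhds (1 - δ)) := by
    have hlogQpos : (0 : ℝ) < Real.log Q := Real.log_pos hQ1
    have h0 : Filter.Tendsto (fun n : ℕ => (2 + Real.logb Q (n + 1)) / n)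
        Filter.atTop (nhds 0) := by
      have he : (fun n : ℕ => (2 + Real.logb Q (n + 1)) / n)
          = fun n : ℕ => 2 / n + (Real.log (n + 1) / n) * (1 / Real.log Q) := by
        funext n
        rw [add_div, Real.logb]
        ring
      rw [he]
      have t1 : Filter.Tendsto (fun n : ℕ => 2 / (n : ℝ)) Filter.atTop (nhds 0) :=
        tendsto_const_div_atTop_nhds_zero_nat 2
      have t2 := tendsto_log_succ_div.mul_const (1 / Real.log Q)
      rw [zero_mul] at t2
      have := t1.add t2
      rwa [add_zero] at this
    have := (tendsto_const_nhds (x := (1 : ℝ) - δ) (f := Filter.atTop (α := ℕ))).add h0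
    rwa [add_zero] at this
  have hbg : Filter.IsBoundedUnder (· ≤ ·) Filter.atTop g := hgt.isBoundedUnder_le
  have hf0 : ∀ n : ℕ, 0 ≤ f n := by
    intro n
    rcases Nat.eq_zero_or_pos n with rfl | hn
    · simp [hf]
    · have hn0 : (0 : ℝ) < (n : ℝ) := by positivity
      apply mul_nonneg (by positivity)
      apply Real.logb_nonneg hQ1
      exact_mod_cast one_le_BmaxHom γ s q n (δ * n)
  have hcf : Filter.IsCoboundedUnder (· ≤ ·) Filter.atTop f :=
    Filter.isCoboundedUnder_le_of_le Filter.atTop (x := 0) hf0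
  have hfg' : f ≤ᶠ[Filter.atTop] g := by
    filter_upwards [Filter.eventually_atTop.mpr ⟨1, fun n hn => hn⟩] with n hn
    exact hfg n hn
  calc Filter.limsup f Filter.atTop ≤ Filter.limsup g Filter.atTop :=
        Filter.limsup_le_limsup hfg' hcf hbg
    _ = 1 - δ := hgt.limsup_eq

lemma BmaxHom_le_pow {R : Type*} [CommRing R] [Fintype R] (γ : R) (s q : ℕ)
    (n : ℕ) (d : ℝ) : BmaxHom γ s q n d ≤ Fintype.card R ^ n := by
  classical
  apply csSup_le
  · exact ⟨1, ⊥, fun c hc hc0 => absurd (Submodule.mem_bot R |>.mp hc) hc0, card_bot_submodule⟩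
  · rintro N ⟨C, -, rfl⟩
    calc Nat.card C ≤ Nat.card (Fin n → R) :=
          Nat.card_le_card_of_injective _ Subtype.val_injective
      _ = Fintype.card R ^ n := by
          rw [Nat.card_eq_fintype_card, Fintype.card_fun, Fintype.card_fin]

/-- Asymptotic Plotkin bound in the homogeneous metric: `β_R(δ) ≤ 1 - δ` for
`0 ≤ δ ≤ 1`; in particular `β_R(1) = 0`. -/
theorem asymptotic_plotkin_bound {R : Type*} [CommRing R] [IsLocalRing R] [Fintype R]
    (γ : R) (s q : ℕ) (hs : 1 ≤ s)
    (hmax : IsLocalRing.maximalIdeal R = Ideal.span {γ})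
    (hnil : γ ^ s = 0) (hnil' : γ ^ (s - 1) ≠ 0)
    (hq : Nat.card (R ⧸ IsLocalRing.maximalIdeal R) = q) :
    (∀ δ : ℝ, 0 ≤ δ → δ ≤ 1 →
      Filter.limsup (fun n : ℕ => (1 / (n : ℝ)) *
          Real.logb (Fintype.card R) (BmaxHom γ s q n (δ * n))) Filter.atTop
        ≤ 1 - δ) ∧
    Filter.limsup (fun n : ℕ => (1 / (n : ℝ)) *
        Real.logb (Fintype.card R) (BmaxHom γ s q n ((1 : ℝ) * n))) Filter.atTop = 0 := by
  have hRnt : Nontrivial R := nontrivial_of_ne _ _ hnil'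
  have hQ : 1 < Fintype.card R := Fintype.one_lt_card
  have hQ1 : (1 : ℝ) < ((Fintype.card R : ℕ) : ℝ) := by exact_mod_cast hQ
  have hMax : (IsLocalRing.maximalIdeal R).IsMaximal := IsLocalRing.maximalIdeal.isMaximal R
  haveI hfin : Finite (R ⧸ IsLocalRing.maximalIdeal R) :=
    Finite.of_surjective _ Ideal.Quotient.mk_surjective
  have hnontriv : Nontrivial (R ⧸ IsLocalRing.maximalIdeal R) :=
    Ideal.Quotient.nontrivial_iff.mpr hMax.ne_top
  have hq2 : 2 ≤ q := by
    rw [← hq]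
    exact (Finite.one_lt_card_iff_nontrivial (α := R ⧸ IsLocalRing.maximalIdeal R)).mpr hnontriv
  have hcard : Nat.card (Ideal.span {γ ^ (s-1)} : Ideal R) ≤ q :=
    card_socle_le γ s q hs hnil (hmax ▸ hq)
  have hpart1 : ∀ δ : ℝ, 0 ≤ δ → δ ≤ 1 →
      Filter.limsup (fun n : ℕ => (1 / (n : ℝ)) *
          Real.logb (Fintype.card R) (BmaxHom γ s q n (δ * n))) Filter.atTop ≤ 1 - δ :=
    fun δ h0 h1 => limsup_le γ s q hq2 hQ hcard δ h0 h1
  refine ⟨hpart1, le_antisymm ?_ ?_⟩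
  · have := hpart1 1 zero_le_one le_rfl
    simpa using this
  · set f : ℕ → ℝ := fun n : ℕ => (1 / (n : ℝ)) *
        Real.logb (Fintype.card R) (BmaxHom γ s q n ((1 : ℝ) * n)) with hfdef
    have hf0 : ∀ n : ℕ, 0 ≤ f n := by
      intro n
      rcases Nat.eq_zero_or_pos n with rfl | hn
      · simp [hfdef]
      · apply mul_nonneg (by positivity)
        apply Real.logb_nonneg hQ1
        exact_mod_cast one_le_BmaxHom γ s q n ((1 : ℝ) * n)
    have hf1 : ∀ n : ℕ, f n ≤ 1 := by
      intro n
      rcases Nat.eq_zero_or_pos n with rfl | hn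
      · simp [hfdef]
      · have hn0 : (0 : ℝ) < (n : ℝ) := by exact_mod_cast hn
        have hB1 : (1 : ℝ) ≤ (BmaxHom γ s q n ((1 : ℝ) * n) : ℝ) := by
          exact_mod_cast one_le_BmaxHom γ s q n ((1 : ℝ) * n)
        have hlog : Real.logb (Fintype.card R) (BmaxHom γ s q n ((1 : ℝ) * n)) ≤ n := by
          calc Real.logb (Fintype.card R) (BmaxHom γ s q n ((1 : ℝ) * n))
              ≤ Real.logb (Fintype.card R) ((Fintype.card R ^ n : ℕ) : ℝ) := by
                apply Real.logb_le_logb_of_le hQ1 (by linarith)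
                exact_mod_cast BmaxHom_le_pow γ s q n ((1 : ℝ) * n)
            _ = n := by
                push_cast
                rw [Real.logb_pow, Real.logb_self_eq_one hQ1, mul_one]
        calc f n ≤ (1 / (n : ℝ)) * n := by
              apply mul_le_mul_of_nonneg_left hlog (by positivity)
          _ = 1 := by field_simp
    apply Filter.le_limsup_of_frequently_le
    · exact (Filter.Eventually.of_forall hf0).frequently
    · exact Filter.isBoundedUnder_of ⟨1, hf1⟩
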